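/- Let a : ℝⁿ × ℝⁿ → ℝ be a positive definite symmetric bilinear form with associated quadratic form α²(y) = a(y,y), and let β(y) = ⟨b, y⟩ be a nonzero linear form (b ≠ 0). Suppose η : ℝⁿ → ℝ is a linear form and f ∈ ℝ satisfies η(y)·β(y) + f·α²(y) = 0 for all y ∈ ℝⁿ. Then f = 0 and η = 0. -/

import Mathlib

/-- If a linear form `η` and a scalar `f` satisfy `η(y)·β(y) + f·α²(y) = 0` for all `y`,
with `α²` positive definite and `β` a nonzero linear form, `n ≥ 2`, then `f = 0` and `η = 0`. -/
theorem stmt1 (n : ℕ) (hn : 2 ≤ n) (a : Matrix (Fin n) (Fin n) ℝ) (ha : a.PosDef)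
    (b : Fin n → ℝ) (hb : b ≠ 0) (η : (Fin n → ℝ) →ₗ[ℝ] ℝ) (f : ℝ)
    (h : ∀ y : Fin n → ℝ,
      η y * (∑ i, b i * y i) + f * (∑ i, ∑ j, a i j * y i * y j) = 0) :
    f = 0 ∧ η = 0 := by
  -- quadratic form equals dot product form
  have hQ : ∀ y : Fin n → ℝ, (∑ i, ∑ j, a i j * y i * y j) = dotProduct y (a.mulVec y) := by
    intro y
    simp only [dotProduct, Matrix.mulVec, Finset.mul_sum]
    refine Finset.sum_congr rfl fun i _ => Finset.sum_congr rfl fun j _ => by ring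
  -- find i0 with b i0 ≠ 0
  obtain ⟨i0, hi0⟩ : ∃ i, b i ≠ 0 := by
    by_contra hc
    push_neg at hc
    exact hb (funext hc)
  -- find j ≠ i0
  obtain ⟨j, hj⟩ : ∃ j : Fin n, j ≠ i0 := by
    have : Nontrivial (Fin n) := Fin.nontrivial_iff_two_le.mpr hn
    exact exists_ne i0
  -- construct y in kernel of β, nonzero
  set y : Fin n → ℝ := fun k => if k = j then b i0 else if k = i0 then -(b j) else 0 with hy
  have hyj : y j = b i0 := by simp [hy]
  have hyne : y ≠ 0 := by
    intro h0
    apply hi0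
    have := congrFun h0 j
    rwa [hyj] at this
  have hBy : (∑ i, b i * y i) = 0 := by
    have : (∑ i, b i * y i) = b j * y j + b i0 * y i0 := by
      rw [← Finset.sum_subset (Finset.subset_univ {j, i0})]
      · rw [Finset.sum_insert (by simp [hj]), Finset.sum_singleton]
      · intro k _ hk
        simp only [Finset.mem_insert, Finset.mem_singleton, not_or] at hk
        simp [hy, hk.1, hk.2]
    rw [this, hyj]
    simp [hy, hj, Ne.symm hj]
    ring
  have hfq := h y
  rw [hBy, mul_zero, zero_add, hQ] at hfq
  have hpos : 0 < dotProduct y (a.mulVec y) := ha.dotProduct_mulVec_pos hyne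
  have hf : f = 0 := by
    rcases mul_eq_zero.mp hfq with hf | hq
    · exact hf
    · exact absurd hq (ne_of_gt hpos)
  refine ⟨hf, ?_⟩
  -- now η x * β x = 0 for all x
  have h2 : ∀ x : Fin n → ℝ, η x * (∑ i, b i * x i) = 0 := by
    intro x
    have := h x
    rw [hf, zero_mul, add_zero] at this
    exact this
  have hBlin : ∀ x z : Fin n → ℝ, (∑ i, b i * (x i + z i)) =
      (∑ i, b i * x i) + (∑ i, b i * z i) := by
    intro x z
    rw [← Finset.sum_add_distrib]
    exact Finset.sum_congr rfl fun i _ => by ring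
  have hpol : ∀ x z : Fin n → ℝ,
      η x * (∑ i, b i * z i) + η z * (∑ i, b i * x i) = 0 := by
    intro x z
    have hxz := h2 (x + z)
    rw [map_add] at hxz
    have : (∑ i, b i * (x + z) i) = (∑ i, b i * x i) + (∑ i, b i * z i) := hBlin x z
    rw [this] at hxz
    have hx := h2 x
    have hz := h2 z
    nlinarith [hx, hz, hxz]
  have hBb : 0 < (∑ i, b i * b i) := by
    have : (∑ i, b i * b i) = ∑ i, (b i)^2 := by
      exact Finset.sum_congr rfl fun i _ => (sq (b i)).symm
    rw [this]
    apply Finset.sum_pos'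
    · intro i _; positivity
    · exact ⟨i0, Finset.mem_univ i0, by positivity⟩
  have hηb : η b = 0 := by
    have := hpol b b
    nlinarith [this, hBb]
  refine LinearMap.ext fun x => ?_
  show η x = 0
  have := hpol x b
  rw [hηb, zero_mul, add_zero] at this
  rcases mul_eq_zero.mp this with h | h
  · exact h
  · exact absurd h (ne_of_gt hBb)
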